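/- arXiv:1801.05934 — 2 statements merged into one kernel-verified Lean document; each statement's English description precedes it below -/
import Mathlib

section
/- The partition functions of the sticky zero-range process converge: with Z = κ⋆ · Γ(α)^{κ⋆−1} · Π_{x∈S∖S⋆} Γ_x one has lim_{N→∞} Z_N = Z. -/
open Filter Topology Finset
open scoped Classical

noncomputable section

/-- `a(n)`: `a(0)=1`, `a(n)=n^α` for `n ≥ 1`. -/
def aZR (α : ℝ) (n : ℕ) : ℝ := if n = 0 then 1 else (n : ℝ) ^ α

/-- The set of configurations of `N` particles on `S`. -/
def configs (S : Type*) [Fintype S] (N : ℕ) : Finset (S → ℕ) :=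
  (Fintype.piFinset fun _ : S => Finset.range (N + 1)).filter fun η => ∑ x, η x = N

end

/-! ### Auxiliary lemmas -/

lemma aZR_pos (α : ℝ) (n : ℕ) : 0 < aZR α n := by
  unfold aZR
  split_ifs with h
  · norm_num
  · have : (0 : ℝ) < n := by exact_mod_cast Nat.pos_of_ne_zero h
    exact Real.rpow_pos_of_pos this α

lemma aZR_of_ne_zero {α : ℝ} {n : ℕ} (h : n ≠ 0) : aZR α n = (n : ℝ) ^ α := by
  simp [aZR, h]

lemma zr_shift {α c : ℝ} (hα : 0 < α) {g : ℕ → ℝ}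
    (hg : Tendsto (fun n : ℕ => (n : ℝ) ^ α * g n) atTop (𝓝 c)) (k : ℕ) :
    Tendsto (fun N : ℕ => (N : ℝ) ^ α * g (N - k)) atTop (𝓝 c) := by
  have h1 : Tendsto (fun N : ℕ => ((N - k : ℕ) : ℝ) ^ α * g (N - k)) atTop (𝓝 c) :=
    hg.comp (tendsto_sub_atTop_nat k)
  have h2 : Tendsto (fun N : ℕ => ((N : ℝ) / ((N - k : ℕ) : ℝ)) ^ α) atTop (𝓝 1) := by
    have hr : Tendsto (fun N : ℕ => (N : ℝ) / ((N - k : ℕ) : ℝ)) atTop (𝓝 1) := by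
      have he : ∀ᶠ N : ℕ in atTop, (N : ℝ) / ((N - k : ℕ) : ℝ)
          = 1 + (k : ℝ) * (((N - k : ℕ) : ℝ))⁻¹ := by
        filter_upwards [eventually_ge_atTop (k + 1)] with N hN
        have h0 : ((N - k : ℕ) : ℝ) ≠ 0 := by
          have : 1 ≤ N - k := by omega
          positivity
        have hcast : ((N - k : ℕ) : ℝ) = (N : ℝ) - k := by
          have : k ≤ N := by omega
          push_cast [this]; ring
        rw [hcast] at h0 ⊢
        field_simp
        ring
      have : Tendsto (fun N : ℕ => 1 + (k : ℝ) * (((N - k : ℕ) : ℝ))⁻¹) atTop (𝓝 (1 + k * 0)) := by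
        refine tendsto_const_nhds.add (tendsto_const_nhds.mul ?_)
        exact (tendsto_inv_atTop_zero.comp (tendsto_natCast_atTop_atTop.comp
          (tendsto_sub_atTop_nat k)))
      rw [show (1 : ℝ) + k * 0 = 1 by ring] at this
      exact this.congr' (he.mono fun N h => h.symm)
    have := hr.rpow_const (p := α) (Or.inl one_ne_zero)
    simpa using this
  have key : Tendsto (fun N : ℕ => ((N : ℝ) / ((N - k : ℕ) : ℝ)) ^ α *
      (((N - k : ℕ) : ℝ) ^ α * g (N - k))) atTop (𝓝 (1 * c)) := h2.mul h1
  rw [one_mul] at key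
  refine key.congr' ?_
  filter_upwards [eventually_ge_atTop (k + 1)] with N hN
  have h0 : (0:ℝ) < ((N - k : ℕ) : ℝ) := by
    have : 1 ≤ N - k := by omega
    positivity
  rw [Real.div_rpow (by positivity) h0.le]
  have hne : ((N - k : ℕ) : ℝ) ^ α ≠ 0 := by positivity
  field_simp

lemma zr_half {α c : ℝ} (hα : 0 < α) {f g : ℕ → ℝ}
    (hf0 : ∀ n, 0 ≤ f n) (hg0 : ∀ n, 0 ≤ g n) (hfs : Summable f)
    (hg : Tendsto (fun n : ℕ => (n : ℝ) ^ α * g n) atTop (𝓝 c))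
    (e : ℕ → ℕ) (he : ∀ N k, k < e N → k ≤ N ∧ N ≤ 2 * (N - k))
    (he2 : Tendsto e atTop atTop) :
    Tendsto (fun N : ℕ => ∑ k ∈ Finset.range (e N), f k * ((N : ℝ) ^ α * g (N - k)))
      atTop (𝓝 ((∑' k, f k) * c)) := by
  obtain ⟨B, hB⟩ : ∃ B : ℝ, ∀ n : ℕ, (n : ℝ) ^ α * g n ≤ B := by
    obtain ⟨B, hB⟩ := hg.bddAbove_range
    exact ⟨B, fun n => hB ⟨n, rfl⟩⟩
  have hB0 : 0 ≤ B := le_trans (by simp [Real.zero_rpow (by positivity : α ≠ 0)]) (hB 0)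
  set D : ℝ := B * 2 ^ α with hD
  have hD0 : 0 ≤ D := mul_nonneg hB0 (Real.rpow_nonneg (by norm_num) _)
  have hbd : ∀ N k : ℕ, k < e N → (N : ℝ) ^ α * g (N - k) ≤ D := by
    intro N k hk
    obtain ⟨hk1, hk2⟩ := he N k hk
    have hcast : (N : ℝ) ≤ 2 * ((N - k : ℕ) : ℝ) := by exact_mod_cast hk2
    calc (N : ℝ) ^ α * g (N - k)
        ≤ (2 * ((N - k : ℕ) : ℝ)) ^ α * g (N - k) := by
          exact mul_le_mul_of_nonneg_right
            (Real.rpow_le_rpow (by positivity) hcast hα.le) (hg0 _)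
      _ = 2 ^ α * (((N - k : ℕ) : ℝ) ^ α * g (N - k)) := by
          rw [Real.mul_rpow (by norm_num) (by positivity)]; ring
      _ ≤ 2 ^ α * B := by
          exact mul_le_mul_of_nonneg_left (hB _) (Real.rpow_nonneg (by norm_num) _)
      _ = D := by rw [hD]; ring
  have hrw : ∀ N : ℕ, ∑ k ∈ Finset.range (e N), f k * ((N : ℝ) ^ α * g (N - k))
      = ∑' k : ℕ, (if k < e N then f k * ((N : ℝ) ^ α * g (N - k)) else 0) := by
    intro N
    rw [tsum_eq_sum (s := Finset.range (e N))
      (by intro b hb; simp [Finset.mem_range] at hb; simp [hb])]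
    exact Finset.sum_congr rfl fun k hk => by simp [Finset.mem_range] at hk; simp [hk]
  have main : Tendsto (fun N : ℕ => ∑' k : ℕ,
      (if k < e N then f k * ((N : ℝ) ^ α * g (N - k)) else 0)) atTop
      (𝓝 (∑' k : ℕ, f k * c)) := by
    apply tendsto_tsum_of_dominated_convergence (bound := fun k => f k * D)
    · exact hfs.mul_right D
    · intro k
      have h1 : Tendsto (fun N : ℕ => f k * ((N : ℝ) ^ α * g (N - k))) atTop (𝓝 (f k * c)) :=
        (zr_shift hα hg k).const_mul (f k)
      refine h1.congr' ?_
      filter_upwards [he2.eventually_gt_atTop k] with N hN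
      simp [hN]
    · filter_upwards with N k
      by_cases hk : k < e N
      · simp only [hk, if_true]
        rw [Real.norm_of_nonneg (mul_nonneg (hf0 k) (by
          exact mul_nonneg (Real.rpow_nonneg (by positivity) _) (hg0 _)))]
        exact mul_le_mul_of_nonneg_left (hbd N k hk) (hf0 k)
      · simp [hk, mul_nonneg (hf0 k) hD0]
  rw [tsum_mul_right] at main
  exact Tendsto.congr (fun N => (hrw N).symm) main

lemma zr_split (t : ℕ → ℝ) (N : ℕ) :
    ∑ k ∈ Finset.range (N + 1), t k
      = ∑ k ∈ Finset.range (N / 2 + 1), t k + ∑ j ∈ Finset.range (N - N / 2), t (N - j) := by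
  have h1 : N / 2 + 1 ≤ N + 1 := by omega
  have hsplit := Finset.sum_Ico_consecutive t (by omega : 0 ≤ N / 2 + 1) h1
  rw [Finset.range_eq_Ico, ← hsplit, ← Finset.range_eq_Ico]
  congr 1
  · apply Finset.sum_nbij' (i := fun k => N - k) (j := fun j => N - j)
    · intro k hk; simp only [Finset.mem_Ico] at hk; simp only [Finset.mem_range]; omega
    · intro j hj; simp only [Finset.mem_range] at hj; simp only [Finset.mem_Ico]; omega
    · intro k hk; simp only [Finset.mem_Ico] at hk; omega
    · intro j hj; simp only [Finset.mem_range] at hj; omega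
    · intro k hk; simp only [Finset.mem_Ico] at hk; congr 1; omega

lemma zr_conv_tendsto {α cf cg : ℝ} (hα : 0 < α) {f g : ℕ → ℝ}
    (hf0 : ∀ n, 0 ≤ f n) (hg0 : ∀ n, 0 ≤ g n)
    (hfs : Summable f) (hgs : Summable g)
    (hf : Tendsto (fun n : ℕ => (n : ℝ) ^ α * f n) atTop (𝓝 cf))
    (hg : Tendsto (fun n : ℕ => (n : ℝ) ^ α * g n) atTop (𝓝 cg)) :
    Tendsto (fun N : ℕ => (N : ℝ) ^ α * ∑ k ∈ Finset.range (N + 1), f k * g (N - k))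
      atTop (𝓝 ((∑' k, f k) * cg + (∑' k, g k) * cf)) := by
  have hident : ∀ N : ℕ, (N : ℝ) ^ α * ∑ k ∈ Finset.range (N + 1), f k * g (N - k)
      = (∑ k ∈ Finset.range (N / 2 + 1), f k * ((N : ℝ) ^ α * g (N - k)))
        + ∑ j ∈ Finset.range (N - N / 2), g j * ((N : ℝ) ^ α * f (N - j)) := by
    intro N
    rw [zr_split (fun k => f k * g (N - k)) N, mul_add, Finset.mul_sum, Finset.mul_sum]
    congr 1
    · exact Finset.sum_congr rfl fun k _ => by ring
    · refine Finset.sum_congr rfl fun j hj => ?_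
      simp only [Finset.mem_range] at hj
      have : N - (N - j) = j := by omega
      rw [this]; ring
  have h1 := zr_half hα hf0 hg0 hfs hg (fun N => N / 2 + 1)
    (fun N k hk => by omega)
    (tendsto_atTop_atTop.2 fun b => ⟨2 * b, fun N hN => by omega⟩)
  have h2 := zr_half hα hg0 hf0 hgs hf (fun N => N - N / 2)
    (fun N k hk => by omega)
    (tendsto_atTop_atTop.2 fun b => ⟨2 * b, fun N hN => by omega⟩)
  exact Tendsto.congr (fun N => (hident N).symm) (h1.add h2)

lemma zr_conv_summable {f g : ℕ → ℝ}
    (hf0 : ∀ n, 0 ≤ f n) (hg0 : ∀ n, 0 ≤ g n)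
    (hfs : Summable f) (hgs : Summable g) :
    Summable (fun n : ℕ => ∑ k ∈ Finset.range (n + 1), f k * g (n - k))
    ∧ (∑' n : ℕ, ∑ k ∈ Finset.range (n + 1), f k * g (n - k)) = (∑' n, f n) * ∑' n, g n := by
  have hfn : Summable (fun n => ‖f n‖) := by
    refine hfs.congr fun n => ?_
    rw [Real.norm_of_nonneg (hf0 n)]
  have hgn : Summable (fun n => ‖g n‖) := by
    refine hgs.congr fun n => ?_
    rw [Real.norm_of_nonneg (hg0 n)]
  refine ⟨(summable_norm_sum_mul_range_of_summable_norm hfn hgn).of_norm, ?_⟩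
  exact (tsum_mul_tsum_eq_tsum_sum_range_of_summable_norm hfn hgn).symm

/-- The partial partition function over a finite set of sites. -/
noncomputable def zrQ {S : Type*} (w : S → ℕ → ℝ) (s : Finset S) (n : ℕ) : ℝ :=
  ∑ d ∈ Finset.piAntidiag s n, ∏ x ∈ s, w x (d x)

lemma zrQ_empty {S : Type*} (w : S → ℕ → ℝ) (n : ℕ) :
    zrQ w (∅ : Finset S) n = if n = 0 then 1 else 0 := by
  rw [zrQ, Finset.piAntidiag_empty]
  split_ifs <;> simp

lemma zrQ_cons {S : Type*} (w : S → ℕ → ℝ) {i : S} {s : Finset S} (hi : i ∉ s) (n : ℕ) :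
    zrQ w (Finset.cons i s hi) n = ∑ k ∈ Finset.range (n + 1), w i k * zrQ w s (n - k) := by
  rw [zrQ, Finset.piAntidiag_cons hi, Finset.sum_disjiUnion,
    ← Finset.Nat.sum_antidiagonal_eq_sum_range_succ (fun k l => w i k * zrQ w s l)]
  refine Finset.sum_congr rfl fun p hp => ?_
  rw [Finset.sum_map, zrQ, Finset.mul_sum]
  refine Finset.sum_congr rfl fun d hd => ?_
  have hdi : d i = 0 := by
    rw [Finset.mem_piAntidiag] at hd
    by_contra h
    exact hi (hd.2 i h)
  rw [Finset.prod_cons]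
  simp only [addRightEmbedding_apply, Pi.add_apply]
  congr 1
  · simp [hdi]
  · refine Finset.prod_congr rfl fun x hx => ?_
    have hx' : x ≠ i := fun h => hi (h ▸ hx)
    simp [hx']

theorem stmt_0 {S : Type*} [Fintype S] (α : ℝ) (hα : 2 < α)
    (m : S → ℝ) (hm : ∀ x, 0 < m x)
    (Mstar : ℝ) (hMstar : IsGreatest (Set.range m) Mstar)
    (Sstar : Finset S) (hSstar : Sstar = Finset.univ.filter fun x => m x = Mstar)
    (hκ : 2 ≤ Sstar.card)
    (mstar : S → ℝ) (hmstar : ∀ x, mstar x = m x / Mstar)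
    (Γ : S → ℝ) (hΓ : ∀ x, Γ x = ∑' j : ℕ, mstar x ^ j / aZR α j)
    (Γα : ℝ) (hΓα : Γα = ∑' j : ℕ, 1 / aZR α j)
    (Z : ℕ → ℝ)
    (hZ : ∀ N, Z N = (N : ℝ) ^ α *
      ∑ η ∈ configs S N, (∏ x, mstar x ^ η x) / ∏ x, aZR α (η x)) :
    Filter.Tendsto Z Filter.atTop
      (nhds ((Sstar.card : ℝ) * Γα ^ (Sstar.card - 1) * ∏ x ∈ Sstarᶜ, Γ x)) := by
  have hαpos : 0 < α := by linarith
  -- basic facts about mstar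
  have hMpos : 0 < Mstar := by
    obtain ⟨x0, hx0⟩ := hMstar.1
    rw [← hx0]; exact hm x0
  have hms_pos : ∀ x, 0 < mstar x := fun x => by
    rw [hmstar x]; exact div_pos (hm x) hMpos
  have hms_le : ∀ x, mstar x ≤ 1 := fun x => by
    rw [hmstar x, div_le_one hMpos]
    exact hMstar.2 ⟨x, rfl⟩
  have hms_star : ∀ x ∈ Sstar, mstar x = 1 := by
    intro x hx
    rw [hSstar, Finset.mem_filter] at hx
    rw [hmstar x, hx.2, div_self hMpos.ne']
  have hms_lt : ∀ x ∉ Sstar, mstar x < 1 := by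
    intro x hx
    rw [hSstar] at hx
    simp only [Finset.mem_filter, Finset.mem_univ, true_and] at hx
    rw [hmstar x, div_lt_one hMpos]
    exact lt_of_le_of_ne (hMstar.2 ⟨x, rfl⟩) hx
  -- the per-site weights
  set w : S → ℕ → ℝ := fun x j => mstar x ^ j / aZR α j with hw
  have hw0 : ∀ x n, 0 ≤ w x n := fun x n =>
    div_nonneg (pow_nonneg (hms_pos x).le n) (aZR_pos α n).le
  have hwsum : ∀ x, Summable (w x) := by
    intro x
    have base : Summable (fun n : ℕ => 1 / aZR α n) := by
      have h0 : Summable (fun n : ℕ => 1 / (n : ℝ) ^ α) :=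
        Real.summable_one_div_nat_rpow.2 (by linarith)
      have h1 : Summable (fun n : ℕ => 1 / aZR α (n + 1)) := by
        refine ((summable_nat_add_iff 1).2 h0).congr fun n => ?_
        rw [aZR_of_ne_zero (Nat.succ_ne_zero n)]
      exact (summable_nat_add_iff 1).1 h1
    refine Summable.of_nonneg_of_le (fun n => hw0 x n) (fun n => ?_) base
    have hle : mstar x ^ n ≤ 1 := by
      calc mstar x ^ n ≤ 1 ^ n := pow_le_pow_left₀ (hms_pos x).le (hms_le x) n
        _ = 1 := one_pow n
    rw [hw]
    simp only
    gcongr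
    exact (aZR_pos α n).le
  have hwtsum : ∀ x, ∑' n, w x n = Γ x := fun x => (hΓ x).symm
  have hwten : ∀ x : S, Tendsto (fun n : ℕ => (n : ℝ) ^ α * w x n) atTop
      (𝓝 (if x ∈ Sstar then (1 : ℝ) else 0)) := by
    intro x
    by_cases hx : x ∈ Sstar
    · simp only [hx, if_true]
      have : ∀ᶠ n : ℕ in atTop, (n : ℝ) ^ α * w x n = 1 := by
        filter_upwards [eventually_ge_atTop 1] with n hn
        have hne : n ≠ 0 := by omega
        have hpos : (0 : ℝ) < (n : ℝ) ^ α := Real.rpow_pos_of_pos (by exact_mod_cast hn) α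
        rw [hw]
        simp only
        rw [hms_star x hx, one_pow, aZR_of_ne_zero hne]
        field_simp
      exact tendsto_const_nhds.congr' (this.mono fun n h => h.symm)
    · simp only [hx, if_false]
      have hlim : Tendsto (fun n : ℕ => mstar x ^ n) atTop (𝓝 0) :=
        tendsto_pow_atTop_nhds_zero_of_lt_one (hms_pos x).le (hms_lt x hx)
      refine hlim.congr' ?_
      filter_upwards [eventually_ge_atTop 1] with n hn
      have hne : n ≠ 0 := by omega
      have hpos : (0 : ℝ) < (n : ℝ) ^ α := Real.rpow_pos_of_pos (by exact_mod_cast hn) α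
      rw [hw]
      simp only
      rw [aZR_of_ne_zero hne]
      field_simp
  -- the main induction over finsets of sites
  have key : ∀ s : Finset S,
      (∀ n, 0 ≤ zrQ w s n) ∧ Summable (zrQ w s) ∧ (∑' n, zrQ w s n) = (∏ x ∈ s, Γ x) ∧
      Tendsto (fun N : ℕ => (N : ℝ) ^ α * zrQ w s N) atTop
        (𝓝 (∑ x ∈ s.filter (· ∈ Sstar), ∏ y ∈ s.erase x, Γ y)) := by
    intro s
    induction s using Finset.cons_induction with
    | empty =>
      refine ⟨fun n => by rw [zrQ_empty]; split_ifs <;> norm_num, ?_, ?_, ?_⟩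
      · refine Summable.congr (f := fun n : ℕ => if n = 0 then (1:ℝ) else 0) ?_ ?_
        · exact (hasSum_ite_eq 0 (1:ℝ)).summable.congr fun n => by simp [eq_comm]
        · intro n; rw [zrQ_empty]
      · rw [Finset.prod_empty]
        have : (zrQ w (∅ : Finset S)) = fun n : ℕ => if n = 0 then (1:ℝ) else 0 := by
          funext n; rw [zrQ_empty]
        rw [this]
        have := (hasSum_ite_eq (0:ℕ) (1:ℝ)).tsum_eq
        rw [← this]
        exact tsum_congr fun n => by simp [eq_comm]
      · simp only [Finset.filter_empty, Finset.sum_empty]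
        have : ∀ᶠ N : ℕ in atTop, (N : ℝ) ^ α * zrQ w (∅ : Finset S) N = 0 := by
          filter_upwards [eventually_ge_atTop 1] with N hN
          rw [zrQ_empty]
          have : N ≠ 0 := by omega
          simp [this]
        exact tendsto_const_nhds.congr' (this.mono fun n h => h.symm)
    | cons i s hi ih =>
      obtain ⟨ih0, ihs, iht, ihl⟩ := ih
      have hrec : ∀ n, zrQ w (Finset.cons i s hi) n
          = ∑ k ∈ Finset.range (n + 1), w i k * zrQ w s (n - k) := zrQ_cons w hi
      have hsum := zr_conv_summable (hw0 i) ih0 (hwsum i) ihs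
      have hnonneg : ∀ n, 0 ≤ zrQ w (Finset.cons i s hi) n := by
        intro n
        rw [hrec n]
        exact Finset.sum_nonneg fun k _ => mul_nonneg (hw0 i k) (ih0 _)
      have hsummable : Summable (zrQ w (Finset.cons i s hi)) :=
        hsum.1.congr fun n => (hrec n).symm
      have htsum : (∑' n, zrQ w (Finset.cons i s hi) n) = ∏ x ∈ Finset.cons i s hi, Γ x := by
        rw [tsum_congr hrec, hsum.2, hwtsum i, iht, Finset.prod_cons]
      refine ⟨hnonneg, hsummable, htsum, ?_⟩
      have hconv := zr_conv_tendsto hαpos (hw0 i) ih0 (hwsum i) ihs (hwten i) ihl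
      have hlim : Tendsto (fun N : ℕ => (N : ℝ) ^ α * zrQ w (Finset.cons i s hi) N) atTop
          (𝓝 ((∑' k, w i k) * (∑ x ∈ s.filter (· ∈ Sstar), ∏ y ∈ s.erase x, Γ y)
            + (∑' k, zrQ w s k) * (if i ∈ Sstar then (1:ℝ) else 0))) := by
        refine Tendsto.congr (fun N => ?_) hconv
        rw [hrec N]
      rw [hwtsum i, iht] at hlim
      -- identify the limit constant
      have hconst : Γ i * (∑ x ∈ s.filter (· ∈ Sstar), ∏ y ∈ s.erase x, Γ y)
            + (∏ x ∈ s, Γ x) * (if i ∈ Sstar then (1:ℝ) else 0)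
          = ∑ x ∈ (Finset.cons i s hi).filter (· ∈ Sstar),
              ∏ y ∈ (Finset.cons i s hi).erase x, Γ y := by
        rw [Finset.cons_eq_insert, Finset.filter_insert]
        by_cases hiS : i ∈ Sstar
        · simp only [hiS, if_true]
          have hinotin : i ∉ s.filter (· ∈ Sstar) := fun h => hi (Finset.mem_of_mem_filter i h)
          rw [Finset.sum_insert hinotin, Finset.erase_insert hi]
          have : ∀ x ∈ s.filter (· ∈ Sstar),
              ∏ y ∈ (insert i s).erase x, Γ y = Γ i * ∏ y ∈ s.erase x, Γ y := by
            intro x hx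
            have hxs : x ∈ s := Finset.mem_of_mem_filter x hx
            have hxi : x ≠ i := fun h => hi (h ▸ hxs)
            rw [Finset.erase_insert_of_ne hxi.symm,
              Finset.prod_insert (fun h => hi (Finset.mem_of_mem_erase h))]
          rw [Finset.sum_congr rfl this, ← Finset.mul_sum, mul_one]
          ring
        · simp only [hiS, if_false]
          have : ∀ x ∈ s.filter (· ∈ Sstar),
              ∏ y ∈ (insert i s).erase x, Γ y = Γ i * ∏ y ∈ s.erase x, Γ y := by
            intro x hx
            have hxs : x ∈ s := Finset.mem_of_mem_filter x hx
            have hxi : x ≠ i := fun h => hi (h ▸ hxs)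
            rw [Finset.erase_insert_of_ne hxi.symm,
              Finset.prod_insert (fun h => hi (Finset.mem_of_mem_erase h))]
          rw [Finset.sum_congr rfl this, ← Finset.mul_sum, mul_zero, add_zero]
      rw [← hconst]
      exact hlim
  -- assemble
  obtain ⟨-, -, -, hfinal⟩ := key Finset.univ
  -- identify Z with the universal zrQ
  have hZQ : ∀ N, Z N = (N : ℝ) ^ α * zrQ w Finset.univ N := by
    intro N
    rw [hZ N]
    congr 1
    have hconf : configs S N = Finset.piAntidiag (Finset.univ : Finset S) N := by
      ext η
      simp only [configs, Finset.mem_filter, Fintype.mem_piFinset, Finset.mem_range,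
        Finset.mem_piAntidiag, Finset.mem_univ, implies_true, and_true]
      constructor
      · rintro ⟨-, h2⟩; exact h2
      · intro h1
        refine ⟨fun x => ?_, h1⟩
        have h2 : η x ≤ N := by
          rw [← h1]
          exact Finset.single_le_sum (f := η) (fun i _ => Nat.zero_le _) (Finset.mem_univ x)
        omega
    rw [zrQ, ← hconf]
    refine Finset.sum_congr rfl fun η _ => ?_
    rw [hw, ← Finset.prod_div_distrib]
  -- identify the limit constant
  have hconst : (∑ x ∈ Finset.univ.filter (· ∈ Sstar), ∏ y ∈ Finset.univ.erase x, Γ y)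
      = (Sstar.card : ℝ) * Γα ^ (Sstar.card - 1) * ∏ x ∈ Sstarᶜ, Γ x := by
    have hfil : (Finset.univ.filter (· ∈ Sstar) : Finset S) = Sstar := by
      ext x; simp
    rw [hfil]
    have hterm : ∀ x ∈ Sstar, ∏ y ∈ Finset.univ.erase x, Γ y
        = Γα ^ (Sstar.card - 1) * ∏ y ∈ Sstarᶜ, Γ y := by
      intro x hx
      have hdecomp : (Finset.univ.erase x : Finset S) = (Sstar.erase x) ∪ Sstarᶜ := by
        ext y
        simp only [Finset.mem_erase, Finset.mem_univ, and_true, Finset.mem_union,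
          Finset.mem_compl]
        constructor
        · intro hy
          by_cases hyS : y ∈ Sstar
          · exact Or.inl ⟨hy, hyS⟩
          · exact Or.inr hyS
        · rintro (⟨hy, -⟩ | hy)
          · exact hy
          · intro h; exact hy (h ▸ hx)
      have hdisj : Disjoint (Sstar.erase x) Sstarᶜ := by
        refine Finset.disjoint_left.2 fun y hy hyc => ?_
        exact (Finset.mem_compl.1 hyc) (Finset.mem_of_mem_erase hy)
      rw [hdecomp, Finset.prod_union hdisj]
      congr 1
      have : ∀ y ∈ Sstar.erase x, Γ y = Γα := by
        intro y hy
        have hyS : y ∈ Sstar := Finset.mem_of_mem_erase hy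
        rw [hΓ y, hΓα]
        exact tsum_congr fun j => by rw [hms_star y hyS, one_pow]
      rw [Finset.prod_congr rfl this, Finset.prod_const, Finset.card_erase_of_mem hx]
    rw [Finset.sum_congr rfl hterm, Finset.sum_const, nsmul_eq_mul]
    ring
  rw [← hconst]
  exact Tendsto.congr (fun N => (hZQ N).symm) hfinal
end

section
/- Generalized Dirichlet principle (upper bound without divergence-free test flows): let 𝒜, ℬ ⊆ H_N be disjoint and nonempty, let h be the equilibrium potential between 𝒜 and ℬ and cap_N(𝒜,ℬ) = 𝒟_N(h). Then for every real number ε, every function f : H_N → ℝ with f ≡ 1 on 𝒜 and f ≡ 0 on ℬ, and every flow φ with (div φ)(𝒜) = ε, one has cap_N(𝒜,ℬ) ≤ ‖Φ_f − φ‖² + 2ε + 2 Σ_{η ∉ 𝒜∪ℬ} h(η) (div φ)(η). -/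
open Filter Topology Finset
open scoped Classical

noncomputable section

/-- `g(0)=0`, `g(n)=a(n)/a(n-1)` for `n ≥ 1`. -/
def gZR (α : ℝ) (n : ℕ) : ℝ := if n = 0 then 0 else aZR α n / aZR α (n - 1)

/-- `σ^{x,y} η`: move one particle from `x` to `y` (identity if `x = y` or `η x = 0`). -/
def move {S : Type*} (x y : S) (η : S → ℕ) : S → ℕ :=
  if x = y ∨ η x = 0 then η
  else Function.update (Function.update η x (η x - 1)) y (η y + 1)

/-- The zero-range generator with jump rates `r`. -/
def LgenR {S : Type*} [Fintype S] (α : ℝ) (r : S → S → ℝ)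
    (f : (S → ℕ) → ℝ) (η : S → ℕ) : ℝ :=
  ∑ x, ∑ y, gZR α (η x) * r x y * (f (move x y η) - f η)

/-- The Dirichlet form of the zero-range process. -/
def DirN {S : Type*} [Fintype S] (α : ℝ) (r : S → S → ℝ)
    (μ : (S → ℕ) → ℝ) (N : ℕ) (f : (S → ℕ) → ℝ) : ℝ :=
  (1 / 2) * ∑ η ∈ configs S N, ∑ x, ∑ y,
    μ η * gZR α (η x) * r x y * (f (move x y η) - f η) ^ 2


/-- Adjacency `η ∼ ζ` on `H_N`. -/
def AdjZR {S : Type*} (r : S → S → ℝ) (η ζ : S → ℕ) : Prop :=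
  ∃ x y : S, x ≠ y ∧ 1 ≤ η x ∧ 0 < r x y + r y x ∧ ζ = move x y η

/-- Conductance `c_N(η,ζ)`. -/
def condZR {S : Type*} [Fintype S] (α : ℝ) (r : S → S → ℝ) (μ : (S → ℕ) → ℝ)
    (η ζ : S → ℕ) : ℝ :=
  ∑ x, ∑ y, if x ≠ y ∧ 1 ≤ η x ∧ ζ = move x y η
    then μ η * gZR α (η x) * r x y else 0

/-- Symmetrized conductance `c_N^s(η,ζ)`. -/
def csymZR {S : Type*} [Fintype S] (α : ℝ) (r : S → S → ℝ) (μ : (S → ℕ) → ℝ)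
    (η ζ : S → ℕ) : ℝ :=
  (condZR α r μ η ζ + condZR α r μ ζ η) / 2

/-- The flow `Φ_f` associated with a function `f`. -/
def PhiF {S : Type*} [Fintype S] (α : ℝ) (r : S → S → ℝ) (μ : (S → ℕ) → ℝ)
    (f : (S → ℕ) → ℝ) (η ζ : S → ℕ) : ℝ :=
  f η * condZR α r μ η ζ - f ζ * condZR α r μ ζ η

/-- Squared flow norm `‖φ‖²`. -/
def flowNormSq (S : Type*) [Fintype S] (α : ℝ) (r : S → S → ℝ) (μ : (S → ℕ) → ℝ)
    (N : ℕ) (φ : (S → ℕ) → (S → ℕ) → ℝ) : ℝ :=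
  (1 / 2) * ∑ η ∈ configs S N, ∑ ζ ∈ configs S N,
    if AdjZR r η ζ then (φ η ζ) ^ 2 / csymZR α r μ η ζ else 0

/-- Divergence of a flow at a configuration. -/
def divFlow (S : Type*) [Fintype S] (r : S → S → ℝ) (N : ℕ)
    (φ : (S → ℕ) → (S → ℕ) → ℝ) (η : S → ℕ) : ℝ :=
  ∑ ζ ∈ configs S N, if AdjZR r η ζ then φ η ζ else 0

end

noncomputable section

namespace ZR0
variable {S : Type*} [Fintype S]

lemma move_eq_update {x y : S} {η : S → ℕ} (hxy : x ≠ y) (hx : 1 ≤ η x) :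
    move x y η = Function.update (Function.update η x (η x - 1)) y (η y + 1) :=
  if_neg (by push_neg; exact ⟨hxy, by omega⟩)

lemma move_self {x y : S} {η : S → ℕ} (h : x = y ∨ η x = 0) : move x y η = η := if_pos h

lemma move_apply_fst {x y : S} {η : S → ℕ} (hxy : x ≠ y) (hx : 1 ≤ η x) :
    move x y η x = η x - 1 := by
  rw [move_eq_update hxy hx, Function.update_of_ne hxy, Function.update_self]

lemma move_apply_snd {x y : S} {η : S → ℕ} (hxy : x ≠ y) (hx : 1 ≤ η x) :
    move x y η y = η y + 1 := by
  rw [move_eq_update hxy hx, Function.update_self]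

lemma move_apply_other {x y z : S} {η : S → ℕ} (hxy : x ≠ y) (hx : 1 ≤ η x)
    (hzx : z ≠ x) (hzy : z ≠ y) : move x y η z = η z := by
  rw [move_eq_update hxy hx, Function.update_of_ne hzy, Function.update_of_ne hzx]

lemma move_move {x y : S} {η : S → ℕ} (hxy : x ≠ y) (hx : 1 ≤ η x) :
    move y x (move x y η) = η := by
  have h1 := move_apply_fst hxy hx
  have h2 := move_apply_snd hxy hx
  have hy : 1 ≤ move x y η y := by omega
  funext z
  rcases eq_or_ne z x with rfl | hzx
  · rw [move_apply_snd hxy.symm hy, h1]; omega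
  · rcases eq_or_ne z y with rfl | hzy
    · rw [move_apply_fst hxy.symm hy, h2]; omega
    · rw [move_apply_other hxy.symm hy hzy hzx, move_apply_other hxy hx hzx hzy]

lemma sum_move {x y : S} {η : S → ℕ} (hxy : x ≠ y) (hx : 1 ≤ η x) :
    ∑ z, move x y η z = ∑ z, η z := by
  have hsub : ({x, y} : Finset S) ⊆ Finset.univ := Finset.subset_univ _
  have key : ∀ ζ : S → ℕ, ∑ z, ζ z = (∑ z ∈ Finset.univ \ {x, y}, ζ z) + (ζ x + ζ y) := by
    intro ζ
    rw [← Finset.sum_pair hxy, Finset.sum_sdiff hsub]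
  have hrest : ∑ z ∈ Finset.univ \ {x, y}, move x y η z = ∑ z ∈ Finset.univ \ {x, y}, η z :=
    Finset.sum_congr rfl (fun z hz => by
      simp only [Finset.mem_sdiff, Finset.mem_insert, Finset.mem_singleton] at hz
      push_neg at hz
      exact move_apply_other hxy hx hz.2.1 hz.2.2)
  rw [key (move x y η), key η, hrest, move_apply_fst hxy hx, move_apply_snd hxy hx]
  omega

lemma mem_configs {N : ℕ} {η : S → ℕ} : η ∈ configs S N ↔ ∑ x, η x = N := by
  constructor
  · intro h; exact (Finset.mem_filter.mp h).2
  · intro h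
    refine Finset.mem_filter.mpr ⟨Fintype.mem_piFinset.mpr fun z => ?_, h⟩
    rw [Finset.mem_range]
    have : η z ≤ ∑ x, η x := Finset.single_le_sum (fun i _ => Nat.zero_le _) (Finset.mem_univ z)
    omega

lemma move_mem_configs {N : ℕ} {x y : S} {η : S → ℕ} (hη : η ∈ configs S N)
    (hxy : x ≠ y) (hx : 1 ≤ η x) : move x y η ∈ configs S N := by
  rw [mem_configs, sum_move hxy hx]; exact mem_configs.mp hη

lemma move_inj {x y x' y' : S} {η : S → ℕ} (hxy : x ≠ y) (hx : 1 ≤ η x)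
    (hxy' : x' ≠ y') (hx' : 1 ≤ η x') (h : move x y η = move x' y' η) :
    x = x' ∧ y = y' := by
  have hxx' : x = x' := by
    by_contra hne
    rcases eq_or_ne x' y with rfl | hx'y
    · have := congrFun h x'
      rw [move_apply_snd hxy hx, move_apply_fst hxy' hx'] at this
      omega
    · have := congrFun h x'
      rw [move_apply_other hxy hx (Ne.symm hne) hx'y, move_apply_fst hxy' hx'] at this
      omega
  refine ⟨hxx', ?_⟩
  rw [← hxx'] at h hxy' hx'
  by_contra hne
  have hy'x : y' ≠ x := fun hh => hxy' (hh ▸ rfl)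
  have := congrFun h y'
  rw [move_apply_other hxy hx hy'x (Ne.symm hne), move_apply_snd hxy' hx'] at this
  omega

def Q (r : S → S → ℝ) (η : S → ℕ) (x y : S) : Prop :=
  x ≠ y ∧ 1 ≤ η x ∧ 0 < r x y + r y x

lemma condZR_move {α : ℝ} {r : S → S → ℝ} {μ : (S → ℕ) → ℝ} {x y : S} {η : S → ℕ}
    (hxy : x ≠ y) (hx : 1 ≤ η x) :
    condZR α r μ η (move x y η) = μ η * gZR α (η x) * r x y := by
  unfold condZR
  have key : ∀ x' y' : S,
      (x' ≠ y' ∧ 1 ≤ η x' ∧ move x y η = move x' y' η) ↔ (x' = x ∧ y' = y) := by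
    intro x' y'
    constructor
    · rintro ⟨h1, h2, h3⟩
      obtain ⟨e1, e2⟩ := move_inj hxy hx h1 h2 h3
      exact ⟨e1.symm, e2.symm⟩
    · rintro ⟨rfl, rfl⟩
      exact ⟨hxy, hx, rfl⟩
  calc ∑ x', ∑ y', (if x' ≠ y' ∧ 1 ≤ η x' ∧ move x y η = move x' y' η
          then μ η * gZR α (η x') * r x' y' else 0)
      = ∑ x', ∑ y', (if x' = x ∧ y' = y then μ η * gZR α (η x') * r x' y' else 0) := by
        refine Finset.sum_congr rfl fun x' _ => Finset.sum_congr rfl fun y' _ => ?_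
        by_cases hc : x' = x ∧ y' = y
        · rw [if_pos ((key x' y').mpr hc), if_pos hc]
        · rw [if_neg (fun hh => hc ((key x' y').mp hh)), if_neg hc]
    _ = μ η * gZR α (η x) * r x y := by
        simp [ite_and]

lemma condZR_move_rev {α : ℝ} {r : S → S → ℝ} {μ : (S → ℕ) → ℝ} {x y : S} {η : S → ℕ}
    (hxy : x ≠ y) (hx : 1 ≤ η x) :
    condZR α r μ (move x y η) η = μ (move x y η) * gZR α (η y + 1) * r y x := by
  have hy : 1 ≤ move x y η y := by
    rw [move_apply_snd hxy hx]; omega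
  have := condZR_move (α := α) (r := r) (μ := μ) (Ne.symm hxy) hy
  rw [move_move hxy hx] at this
  rw [this, move_apply_snd hxy hx]

lemma sum_adj {N : ℕ} {r : S → S → ℝ} {η : S → ℕ} (hη : η ∈ configs S N)
    (G : (S → ℕ) → ℝ) :
    ∑ ζ ∈ configs S N, (if AdjZR r η ζ then G ζ else 0)
      = ∑ x, ∑ y, (if Q r η x y then G (move x y η) else 0) := by
  have h1 : (∑ ζ ∈ configs S N, if AdjZR r η ζ then G ζ else 0)
      = ∑ ζ ∈ (configs S N).filter (AdjZR r η), G ζ := (Finset.sum_filter _ _).symm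
  have h2 : (∑ x, ∑ y, if Q r η x y then G (move x y η) else 0)
      = ∑ p ∈ (Finset.univ ×ˢ Finset.univ).filter (fun p : S × S => Q r η p.1 p.2),
          G (move p.1 p.2 η) := by
    rw [Finset.sum_filter, Finset.sum_product]
  rw [h1, h2]
  refine (Finset.sum_bij (fun p _ => move p.1 p.2 η) ?_ ?_ ?_ ?_).symm
  · intro p hp
    simp only [Finset.mem_filter] at hp
    obtain ⟨ha, hb, hc⟩ := hp.2
    exact Finset.mem_filter.mpr ⟨move_mem_configs hη ha hb, p.1, p.2, ha, hb, hc, rfl⟩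
  · intro p1 hp1 p2 hp2 he
    simp only [Finset.mem_filter] at hp1 hp2
    obtain ⟨a1, b1, c1⟩ := hp1.2; obtain ⟨a2, b2, c2⟩ := hp2.2
    obtain ⟨e1, e2⟩ := move_inj a1 b1 a2 b2 he
    exact Prod.ext e1 e2
  · intro ζ hζ
    simp only [Finset.mem_filter] at hζ
    obtain ⟨-, x, y, h1, h2, h3, h4⟩ := hζ
    exact ⟨(x, y), Finset.mem_filter.mpr
      ⟨Finset.mem_product.mpr ⟨Finset.mem_univ _, Finset.mem_univ _⟩, h1, h2, h3⟩, h4.symm⟩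
  · intro p hp; rfl

lemma sum_rev {N : ℕ} {r : S → S → ℝ} (F : (S → ℕ) → S → S → ℝ) :
    ∑ η ∈ configs S N, ∑ x, ∑ y, (if Q r η x y then F η x y else 0)
      = ∑ η ∈ configs S N, ∑ x, ∑ y, (if Q r η x y then F (move x y η) y x else 0) := by
  have conv : ∀ F' : (S → ℕ) → S → S → ℝ,
      (∑ η ∈ configs S N, ∑ x, ∑ y, if Q r η x y then F' η x y else 0)
        = ∑ p ∈ (configs S N ×ˢ (Finset.univ ×ˢ Finset.univ)).filter
            (fun p : (S → ℕ) × S × S => Q r p.1 p.2.1 p.2.2), F' p.1 p.2.1 p.2.2 := by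
    intro F'
    rw [Finset.sum_filter, Finset.sum_product]
    exact Finset.sum_congr rfl fun η _ => by rw [Finset.sum_product]
  rw [conv, conv]
  refine Finset.sum_nbij' (fun p => (move p.2.1 p.2.2 p.1, (p.2.2, p.2.1)))
    (fun p => (move p.2.1 p.2.2 p.1, (p.2.2, p.2.1))) ?_ ?_ ?_ ?_ ?_
  · intro p hp
    simp only [Finset.mem_filter, Finset.mem_product] at hp ⊢
    obtain ⟨⟨hmem, -⟩, ha, hb, hc⟩ := hp
    refine ⟨⟨move_mem_configs hmem ha hb, Finset.mem_univ _, Finset.mem_univ _⟩,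
      Ne.symm ha, ?_, by linarith⟩
    rw [move_apply_snd ha hb]; omega
  · intro p hp
    simp only [Finset.mem_filter, Finset.mem_product] at hp ⊢
    obtain ⟨⟨hmem, -⟩, ha, hb, hc⟩ := hp
    refine ⟨⟨move_mem_configs hmem ha hb, Finset.mem_univ _, Finset.mem_univ _⟩,
      Ne.symm ha, ?_, by linarith⟩
    rw [move_apply_snd ha hb]; omega
  · intro p hp
    simp only [Finset.mem_filter] at hp
    obtain ⟨-, ha, hb, -⟩ := hp
    simp only [move_move ha hb]
  · intro p hp
    simp only [Finset.mem_filter] at hp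
    obtain ⟨-, ha, hb, -⟩ := hp
    simp only [move_move ha hb]
  · intro p hp
    simp only [Finset.mem_filter] at hp
    obtain ⟨-, ha, hb, -⟩ := hp
    simp only [move_move ha hb]

lemma aZR_pos {α : ℝ} (n : ℕ) : 0 < aZR α n := by
  unfold aZR
  split
  · norm_num
  · next h => exact Real.rpow_pos_of_pos (by exact_mod_cast Nat.pos_of_ne_zero h) _

lemma gZR_eq {α : ℝ} {n : ℕ} (hn : n ≠ 0) : gZR α n = aZR α n / aZR α (n - 1) := if_neg hn

lemma gZR_pos {α : ℝ} {n : ℕ} (hn : n ≠ 0) : 0 < gZR α n := by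
  rw [gZR_eq hn]
  exact div_pos (aZR_pos _) (aZR_pos _)

lemma gZR_nonneg {α : ℝ} (n : ℕ) : 0 ≤ gZR α n := by
  rcases Nat.eq_zero_or_pos n with rfl | hn
  · simp [gZR]
  · exact (gZR_pos (by omega)).le

lemma prod_move (G : S → ℕ → ℝ) {x y : S} {η : S → ℕ} (hxy : x ≠ y) (hx : 1 ≤ η x) :
    (∏ z, G z (move x y η z)) * (G x (η x) * G y (η y))
      = (∏ z, G z (η z)) * (G x (η x - 1) * G y (η y + 1)) := by
  have key : ∀ ζ : S → ℕ,
      ∏ z, G z (ζ z) = (∏ z ∈ Finset.univ \ {x, y}, G z (ζ z)) * (G x (ζ x) * G y (ζ y)) := by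
    intro ζ
    rw [← Finset.prod_sdiff (Finset.subset_univ ({x, y} : Finset S)), Finset.prod_pair hxy]
  have hrest : ∏ z ∈ Finset.univ \ {x, y}, G z (move x y η z)
      = ∏ z ∈ Finset.univ \ {x, y}, G z (η z) :=
    Finset.prod_congr rfl (fun z hz => by
      simp only [Finset.mem_sdiff, Finset.mem_insert, Finset.mem_singleton] at hz
      push_neg at hz
      rw [move_apply_other hxy hx hz.2.1 hz.2.2])
  rw [key (move x y η), key η, hrest, move_apply_fst hxy hx, move_apply_snd hxy hx]
  ring

lemma mu_ratio {α : ℝ} {mstar : S → ℝ} (hms : ∀ z, 0 < mstar z) (ZN Nα : ℝ)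
    (μ' : (S → ℕ) → ℝ)
    (hμ' : ∀ η, μ' η = Nα * (∏ z, mstar z ^ η z) / (ZN * ∏ z, aZR α (η z)))
    {x y : S} {η : S → ℕ} (hxy : x ≠ y) (hx : 1 ≤ η x) :
    μ' (move x y η) * gZR α (η y + 1) = μ' η * gZR α (η x) * (mstar y / mstar x) := by
  by_cases hZ : ZN = 0
  · simp [hμ', hZ]
  have hP := prod_move (fun z n => mstar z ^ n) hxy hx
  have hA := prod_move (fun _ n => aZR α n) hxy hx
  have hmsx := hms x
  have hmsy := hms y
  rw [show mstar x ^ η x = mstar x ^ (η x - 1) * mstar x by rw [← pow_succ]; congr 1; omega,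
    pow_succ] at hP
  have hPdiv : (∏ z, mstar z ^ (move x y η) z)
      = (∏ z, mstar z ^ η z) * mstar y / mstar x := by
    rw [eq_div_iff hmsx.ne']
    have hpos : (0:ℝ) < mstar x ^ (η x - 1) * mstar y ^ η y := by positivity
    apply mul_right_cancel₀ hpos.ne'
    linear_combination hP
  have hax := aZR_pos (α := α) (η x)
  have hax1 := aZR_pos (α := α) (η x - 1)
  have hay := aZR_pos (α := α) (η y)
  have hay1 := aZR_pos (α := α) (η y + 1)
  have hAdiv : (∏ z, aZR α ((move x y η) z))
      = (∏ z, aZR α (η z)) * (aZR α (η x - 1) * aZR α (η y + 1))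
          / (aZR α (η x) * aZR α (η y)) := by
    rw [eq_div_iff (by positivity)]
    linear_combination hA
  rw [hμ' (move x y η), hμ' η, gZR_eq (Nat.succ_ne_zero (η y)), gZR_eq (by omega : η x ≠ 0),
    hPdiv, hAdiv]
  have hAprod : (0:ℝ) < ∏ z, aZR α (η z) := Finset.prod_pos fun z _ => aZR_pos _
  field_simp [hZ, hax.ne', hax1.ne', hay.ne', hay1.ne', hmsx.ne', hmsy.ne', hAprod.ne']
  rw [Nat.succ_sub_one]

lemma stationarity {α : ℝ} {r : S → S → ℝ} (hr0 : ∀ x y, 0 ≤ r x y) (hrdiag : ∀ x, r x x = 0)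
    {m : S → ℝ} (hm : ∀ x, 0 < m x)
    (hinv : ∀ x, ∑ y, m x * r x y = ∑ y, m y * r y x)
    {Mstar : ℝ} (hM : 0 < Mstar)
    {mstar : S → ℝ} (hmstar : ∀ x, mstar x = m x / Mstar)
    (ZN Nα : ℝ) (μ' : (S → ℕ) → ℝ)
    (hμ' : ∀ η, μ' η = Nα * (∏ z, mstar z ^ η z) / (ZN * ∏ z, aZR α (η z)))
    (η : S → ℕ) :
    ∑ x, ∑ y, (if Q r η x y then condZR α r μ' η (move x y η) else 0)
      = ∑ x, ∑ y, (if Q r η x y then condZR α r μ' (move x y η) η else 0) := by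
  have hms : ∀ z, 0 < mstar z := fun z => by rw [hmstar]; exact div_pos (hm z) hM
  have hL : ∀ x y : S, (if Q r η x y then condZR α r μ' η (move x y η) else 0)
      = μ' η * gZR α (η x) * r x y := by
    intro x y
    by_cases hq : Q r η x y
    · rw [if_pos hq, condZR_move hq.1 hq.2.1]
    · rw [if_neg hq]
      unfold Q at hq
      push_neg at hq
      rcases eq_or_ne x y with rfl | hxy
      · rw [hrdiag]; ring
      · rcases Nat.eq_zero_or_pos (η x) with h0 | h1
        · rw [h0]; simp [gZR]
        · have := hq hxy h1
          have hr1 := hr0 x y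
          have hr2 := hr0 y x
          have : r x y = 0 := by linarith
          rw [this]; ring
  have hR : ∀ x y : S, (if Q r η x y then condZR α r μ' (move x y η) η else 0)
      = μ' η * gZR α (η x) * (mstar y / mstar x) * r y x := by
    intro x y
    by_cases hq : Q r η x y
    · rw [if_pos hq, condZR_move_rev hq.1 hq.2.1]
      rw [show μ' (move x y η) * gZR α (η y + 1) * r y x
          = (μ' (move x y η) * gZR α (η y + 1)) * r y x by ring,
        mu_ratio hms ZN Nα μ' hμ' hq.1 hq.2.1]
    · rw [if_neg hq]
      unfold Q at hq
      push_neg at hq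
      rcases eq_or_ne x y with rfl | hxy
      · rw [hrdiag]; ring
      · rcases Nat.eq_zero_or_pos (η x) with h0 | h1
        · rw [h0]; simp [gZR]
        · have := hq hxy h1
          have hr1 := hr0 x y
          have hr2 := hr0 y x
          have : r y x = 0 := by linarith
          rw [this]; ring
  have key : ∀ x : S, ∑ y, mstar y * r y x = mstar x * ∑ y, r x y := by
    intro x
    have h1 : ∑ y, m y * r y x = m x * ∑ y, r x y := by
      rw [← hinv x, Finset.mul_sum]
    calc ∑ y, mstar y * r y x = (∑ y, m y * r y x) / Mstar := by
          rw [Finset.sum_div]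
          exact Finset.sum_congr rfl fun y _ => by rw [hmstar]; ring
      _ = m x * (∑ y, r x y) / Mstar := by rw [h1]
      _ = mstar x * ∑ y, r x y := by rw [hmstar]; ring
  calc ∑ x, ∑ y, (if Q r η x y then condZR α r μ' η (move x y η) else 0)
      = ∑ x, ∑ y, μ' η * gZR α (η x) * r x y := by
        exact Finset.sum_congr rfl fun x _ => Finset.sum_congr rfl fun y _ => hL x y
    _ = ∑ x : S, ∑ y, μ' η * gZR α (η x) * (mstar y / mstar x) * r y x := by
        refine Finset.sum_congr rfl fun x _ => ?_
        have hmx := hms x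
        calc ∑ y, μ' η * gZR α (η x) * r x y
            = μ' η * gZR α (η x) * ∑ y, r x y := by rw [Finset.mul_sum]
          _ = μ' η * gZR α (η x) / mstar x * (mstar x * ∑ y, r x y) := by
              field_simp
          _ = μ' η * gZR α (η x) / mstar x * ∑ y, mstar y * r y x := by rw [key x]
          _ = ∑ y, μ' η * gZR α (η x) * (mstar y / mstar x) * r y x := by
              rw [Finset.mul_sum]
              exact Finset.sum_congr rfl fun y _ => by field_simp
    _ = ∑ x, ∑ y, (if Q r η x y then condZR α r μ' (move x y η) η else 0) := by
        exact (Finset.sum_congr rfl fun x _ => Finset.sum_congr rfl fun y _ => (hR x y)).symm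

def TS (N : ℕ) (r : S → S → ℝ) (F : (S → ℕ) → S → S → ℝ) : ℝ :=
  ∑ η ∈ configs S N, ∑ x, ∑ y, if Q r η x y then F η x y else 0

lemma TS_congr {N : ℕ} {r : S → S → ℝ} {F G : (S → ℕ) → S → S → ℝ}
    (hFG : ∀ η ∈ configs S N, ∀ x y, Q r η x y → F η x y = G η x y) :
    TS N r F = TS N r G := by
  unfold TS
  refine Finset.sum_congr rfl fun η hη => Finset.sum_congr rfl fun x _ =>
    Finset.sum_congr rfl fun y _ => ?_
  by_cases hq : Q r η x y
  · rw [if_pos hq, if_pos hq, hFG η hη x y hq]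
  · rw [if_neg hq, if_neg hq]

lemma TS_add {N : ℕ} {r : S → S → ℝ} (F G : (S → ℕ) → S → S → ℝ) :
    TS N r (fun η x y => F η x y + G η x y) = TS N r F + TS N r G := by
  unfold TS
  rw [← Finset.sum_add_distrib]
  refine Finset.sum_congr rfl fun η _ => ?_
  rw [← Finset.sum_add_distrib]
  refine Finset.sum_congr rfl fun x _ => ?_
  rw [← Finset.sum_add_distrib]
  refine Finset.sum_congr rfl fun y _ => ?_
  split_ifs <;> simp

lemma TS_smul {N : ℕ} {r : S → S → ℝ} (c : ℝ) (F : (S → ℕ) → S → S → ℝ) :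
    TS N r (fun η x y => c * F η x y) = c * TS N r F := by
  unfold TS
  rw [Finset.mul_sum]
  refine Finset.sum_congr rfl fun η _ => ?_
  rw [Finset.mul_sum]
  refine Finset.sum_congr rfl fun x _ => ?_
  rw [Finset.mul_sum]
  refine Finset.sum_congr rfl fun y _ => ?_
  split_ifs <;> simp

lemma TS_neg {N : ℕ} {r : S → S → ℝ} (F : (S → ℕ) → S → S → ℝ) :
    TS N r (fun η x y => -(F η x y)) = -TS N r F := by
  unfold TS
  rw [← Finset.sum_neg_distrib]
  refine Finset.sum_congr rfl fun η _ => ?_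
  rw [← Finset.sum_neg_distrib]
  refine Finset.sum_congr rfl fun x _ => ?_
  rw [← Finset.sum_neg_distrib]
  refine Finset.sum_congr rfl fun y _ => ?_
  split_ifs <;> simp

lemma TS_sub {N : ℕ} {r : S → S → ℝ} (F G : (S → ℕ) → S → S → ℝ) :
    TS N r (fun η x y => F η x y - G η x y) = TS N r F - TS N r G := by
  have h1 : TS N r (fun η x y => F η x y - G η x y)
      = TS N r (fun η x y => F η x y + -(G η x y)) := TS_congr fun η _ x y _ => by ring
  rw [h1, TS_add F (fun η x y => -(G η x y)), TS_neg, sub_eq_add_neg]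

lemma TS_le {N : ℕ} {r : S → S → ℝ} {F G : (S → ℕ) → S → S → ℝ}
    (hFG : ∀ η ∈ configs S N, ∀ x y, Q r η x y → F η x y ≤ G η x y) :
    TS N r F ≤ TS N r G := by
  unfold TS
  refine Finset.sum_le_sum fun η hη => Finset.sum_le_sum fun x _ =>
    Finset.sum_le_sum fun y _ => ?_
  by_cases hq : Q r η x y
  · rw [if_pos hq, if_pos hq]; exact hFG η hη x y hq
  · rw [if_neg hq, if_neg hq]

lemma TS_rev {N : ℕ} {r : S → S → ℝ} (F : (S → ℕ) → S → S → ℝ) :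
    TS N r F = TS N r (fun η x y => F (move x y η) y x) := sum_rev F

lemma notQ {r : S → S → ℝ} (hr0 : ∀ a b, 0 ≤ r a b) (hrdiag : ∀ a, r a a = 0)
    {η : S → ℕ} {x y : S} (hq : ¬ Q r η x y) :
    η x = 0 ∨ (r x y = 0 ∧ r y x = 0) := by
  unfold Q at hq
  push_neg at hq
  rcases eq_or_ne x y with rfl | hxy
  · exact Or.inr ⟨hrdiag x, hrdiag x⟩
  · rcases Nat.eq_zero_or_pos (η x) with h0 | h1
    · exact Or.inl h0
    · have h2 := hq hxy h1
      have h3 := hr0 x y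
      have h4 := hr0 y x
      exact Or.inr ⟨by linarith, by linarith⟩

lemma sum_u_cf {α : ℝ} {r : S → S → ℝ} (hr0 : ∀ a b, 0 ≤ r a b) (hrdiag : ∀ a, r a a = 0)
    (μ' w : (S → ℕ) → ℝ) (η : S → ℕ) :
    ∑ x, ∑ y, (if Q r η x y then
        (w η - w (move x y η)) * condZR α r μ' η (move x y η) else 0)
      = -(μ' η * LgenR α r w η) := by
  unfold LgenR
  rw [Finset.mul_sum, ← Finset.sum_neg_distrib]
  refine Finset.sum_congr rfl fun x _ => ?_
  rw [Finset.mul_sum, ← Finset.sum_neg_distrib]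
  refine Finset.sum_congr rfl fun y _ => ?_
  by_cases hq : Q r η x y
  · rw [if_pos hq, condZR_move hq.1 hq.2.1]
    ring
  · rw [if_neg hq]
    rcases notQ hr0 hrdiag hq with h0 | ⟨h1, -⟩
    · have : move x y η = η := move_self (Or.inr h0)
      rw [this, h0]
      simp [gZR]
    · rw [h1]
      ring

lemma cs_pos {α : ℝ} {r : S → S → ℝ} (hr0 : ∀ a b, 0 ≤ r a b)
    {μ' : (S → ℕ) → ℝ} (hμpos : ∀ ζ, 0 < μ' ζ)
    {η : S → ℕ} {x y : S} (hq : Q r η x y) :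
    0 < csymZR α r μ' η (move x y η) := by
  obtain ⟨hxy, hx, hsum⟩ := hq
  unfold csymZR
  rw [condZR_move hxy hx, condZR_move_rev hxy hx]
  have hg1 : 0 < gZR α (η x) := gZR_pos (by omega)
  have hg2 : 0 < gZR α (η y + 1) := gZR_pos (Nat.succ_ne_zero _)
  have hm1 := hμpos η
  have hm2 := hμpos (move x y η)
  have hcase : 0 < r x y ∨ 0 < r y x := by
    by_contra hc
    push_neg at hc
    linarith [hc.1, hc.2]
  have t1 : 0 ≤ μ' η * gZR α (η x) * r x y :=
    mul_nonneg (mul_nonneg hm1.le hg1.le) (hr0 x y)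
  have t2 : 0 ≤ μ' (move x y η) * gZR α (η y + 1) * r y x :=
    mul_nonneg (mul_nonneg hm2.le hg2.le) (hr0 y x)
  rcases hcase with hpos | hpos
  · have : 0 < μ' η * gZR α (η x) * r x y := mul_pos (mul_pos hm1 hg1) hpos
    linarith
  · have : 0 < μ' (move x y η) * gZR α (η y + 1) * r y x := mul_pos (mul_pos hm2 hg2) hpos
    linarith

lemma cs_ineq {a u c : ℝ} (hc : 0 < c) : 2 * u * a - u ^ 2 * c ≤ a ^ 2 / c := by
  rw [le_div_iff₀ hc]
  nlinarith [sq_nonneg (a - u * c)]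

end ZR0

end

theorem stmt_4 {S : Type*} [Fintype S] (α : ℝ) (hα : 2 < α)
    (r : S → S → ℝ) (hr0 : ∀ x y, 0 ≤ r x y) (hrdiag : ∀ x, r x x = 0)
    (hirr : ∀ x y : S, Relation.ReflTransGen (fun a b => 0 < r a b) x y)
    (m : S → ℝ) (hm : ∀ x, 0 < m x)
    (hinv : ∀ x, ∑ y, m x * r x y = ∑ y, m y * r y x)
    (Mstar : ℝ) (hMstar : IsGreatest (Set.range m) Mstar)
    (mstar : S → ℝ) (hmstar : ∀ x, mstar x = m x / Mstar)
    (Z : ℕ → ℝ)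
    (hZ : ∀ N, Z N = (N : ℝ) ^ α *
      ∑ η ∈ configs S N, (∏ x, mstar x ^ η x) / ∏ x, aZR α (η x))
    (μ : ℕ → (S → ℕ) → ℝ)
    (hμ : ∀ N η, μ N η =
      (N : ℝ) ^ α * (∏ x, mstar x ^ η x) / (Z N * ∏ x, aZR α (η x)))
    (N : ℕ) (hN : 1 ≤ N)
    (A B : Finset (S → ℕ)) (hA : A ⊆ configs S N) (hB : B ⊆ configs S N)
    (hdisj : Disjoint A B) (hAne : A.Nonempty) (hBne : B.Nonempty)
    -- the equilibrium potential between A and B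
    (h : (S → ℕ) → ℝ)
    (hh1 : ∀ η ∈ A, h η = 1) (hh0 : ∀ η ∈ B, h η = 0)
    (hharm : ∀ η ∈ configs S N, η ∉ A → η ∉ B → LgenR α r h η = 0)
    -- test function and test flow
    (ε : ℝ) (f : (S → ℕ) → ℝ)
    (hf1 : ∀ η ∈ A, f η = 1) (hf0 : ∀ η ∈ B, f η = 0)
    (φ : (S → ℕ) → (S → ℕ) → ℝ)
    (hanti : ∀ η ζ, φ η ζ = -φ ζ η)
    (hsupp : ∀ η ζ, ¬AdjZR r η ζ → φ η ζ = 0)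
    (hdiv : ∑ η ∈ A, divFlow S r N φ η = ε) :
    DirN α r (μ N) N h ≤
      flowNormSq S α r (μ N) N (fun η ζ => PhiF α r (μ N) f η ζ - φ η ζ) +
        2 * ε + 2 * ∑ η ∈ configs S N \ (A ∪ B), h η * divFlow S r N φ η := by
  classical
  obtain ⟨η₀, hη₀A⟩ := hAne
  have hη₀ : η₀ ∈ configs S N := hA hη₀A
  have hMpos : 0 < Mstar := by
    obtain ⟨x₀, hx₀⟩ := hMstar.1
    exact hx₀ ▸ hm x₀
  have hms : ∀ z, 0 < mstar z := fun z => by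
    rw [hmstar]; exact div_pos (hm z) hMpos
  have hNα : (0:ℝ) < (N:ℝ) ^ α := Real.rpow_pos_of_pos (by exact_mod_cast hN) α
  have hZpos : 0 < Z N := by
    rw [hZ]
    refine mul_pos hNα (Finset.sum_pos (fun η _ => div_pos
      (Finset.prod_pos fun z _ => pow_pos (hms z) _)
      (Finset.prod_pos fun z _ => ZR0.aZR_pos _)) ⟨η₀, hη₀⟩)
  have hμpos : ∀ ζ : S → ℕ, 0 < μ N ζ := fun ζ => by
    rw [hμ]
    exact div_pos (mul_pos hNα (Finset.prod_pos fun z _ => pow_pos (hms z) _))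
      (mul_pos hZpos (Finset.prod_pos fun z _ => ZR0.aZR_pos _))
  have hABsub : A ∪ B ⊆ configs S N := Finset.union_subset hA hB
  -- divFlow in triple-sum form
  have hdivF : ∀ η ∈ configs S N, divFlow S r N φ η
      = ∑ x, ∑ y, if ZR0.Q r η x y then φ η (move x y η) else 0 := by
    intro η hη
    unfold divFlow
    exact ZR0.sum_adj hη (fun ζ => φ η ζ)
  -- (F1) Dirichlet form as triple sum
  have F1 : DirN α r (μ N) N h = (1/2) * ZR0.TS N r (fun η x y =>
      (h η - h (move x y η))^2 * condZR α r (μ N) η (move x y η)) := by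
    unfold DirN ZR0.TS
    congr 1
    refine Finset.sum_congr rfl fun η _ => Finset.sum_congr rfl fun x _ =>
      Finset.sum_congr rfl fun y _ => ?_
    by_cases hq : ZR0.Q r η x y
    · rw [if_pos hq]
      simp only [ZR0.condZR_move hq.1 hq.2.1]
      ring
    · rw [if_neg hq]
      rcases ZR0.notQ hr0 hrdiag hq with h0 | ⟨h1, -⟩
      · rw [h0]; simp [gZR]
      · rw [h1]; ring
  -- (F2) flow norm as triple sum
  have F2 : flowNormSq S α r (μ N) N (fun η ζ => PhiF α r (μ N) f η ζ - φ η ζ)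
      = (1/2) * ZR0.TS N r (fun η x y =>
        (PhiF α r (μ N) f η (move x y η) - φ η (move x y η))^2
          / csymZR α r (μ N) η (move x y η)) := by
    unfold flowNormSq ZR0.TS
    congr 1
    refine Finset.sum_congr rfl fun η hη => ?_
    exact ZR0.sum_adj hη (fun ζ => (PhiF α r (μ N) f η ζ - φ η ζ)^2 / csymZR α r (μ N) η ζ)
  -- (1) Sb = Sf
  have hSb : ZR0.TS N r (fun η x y =>
        (h η - h (move x y η))^2 * condZR α r (μ N) η (move x y η))
      = ZR0.TS N r (fun η x y =>
        (h η - h (move x y η))^2 * condZR α r (μ N) (move x y η) η) := by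
    calc ZR0.TS N r (fun η x y =>
          (h η - h (move x y η))^2 * condZR α r (μ N) η (move x y η))
        = ZR0.TS N r (fun η x y =>
            (h (move x y η) - h (move y x (move x y η)))^2
              * condZR α r (μ N) (move x y η) (move y x (move x y η))) := ZR0.TS_rev _
      _ = ZR0.TS N r (fun η x y =>
            (h η - h (move x y η))^2 * condZR α r (μ N) (move x y η) η) :=
          ZR0.TS_congr fun η hη x y hq => by
            simp only [ZR0.move_move hq.1 hq.2.1]
            ring
  -- (2) TS (u² csym) = Sf
  have hScs : ZR0.TS N r (fun η x y =>
        (h η - h (move x y η))^2 * csymZR α r (μ N) η (move x y η))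
      = ZR0.TS N r (fun η x y =>
        (h η - h (move x y η))^2 * condZR α r (μ N) η (move x y η)) := by
    have e1 : ZR0.TS N r (fun η x y =>
          (h η - h (move x y η))^2 * csymZR α r (μ N) η (move x y η))
        = ZR0.TS N r (fun η x y =>
            (1/2) * ((h η - h (move x y η))^2 * condZR α r (μ N) η (move x y η))
            + (1/2) * ((h η - h (move x y η))^2 * condZR α r (μ N) (move x y η) η)) :=
      ZR0.TS_congr fun η hη x y hq => by
        simp only [csymZR]
        ring
    rw [e1, ZR0.TS_add, ZR0.TS_smul, ZR0.TS_smul, ← hSb]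
    ring
  -- stationarity: T1 = 0
  have hT1 : ZR0.TS N r (fun η x y =>
      (h η)^2 * (condZR α r (μ N) η (move x y η) - condZR α r (μ N) (move x y η) η)) = 0 := by
    unfold ZR0.TS
    refine Finset.sum_eq_zero fun η hη => ?_
    have hst := ZR0.stationarity hr0 hrdiag hm hinv hMpos hmstar (Z N) ((N:ℝ)^α)
      (μ N) (fun ζ => hμ N ζ) η
    calc ∑ x, ∑ y, (if ZR0.Q r η x y then
            (h η)^2 * (condZR α r (μ N) η (move x y η) - condZR α r (μ N) (move x y η) η)
          else 0)
        = ∑ x, ∑ y, ((h η)^2 * (if ZR0.Q r η x y then condZR α r (μ N) η (move x y η) else 0)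
            - (h η)^2 * (if ZR0.Q r η x y then condZR α r (μ N) (move x y η) η else 0)) := by
          refine Finset.sum_congr rfl fun x _ => Finset.sum_congr rfl fun y _ => ?_
          split_ifs <;> ring
      _ = (h η)^2 * (∑ x, ∑ y, if ZR0.Q r η x y then condZR α r (μ N) η (move x y η) else 0)
            - (h η)^2 * (∑ x, ∑ y, if ZR0.Q r η x y then condZR α r (μ N) (move x y η) η else 0) := by
          simp only [Finset.sum_sub_distrib, ← Finset.mul_sum]
      _ = 0 := by rw [hst]; ring
  -- key lemma: J(w) = 2K for admissible w
  have key_w : ∀ w : (S → ℕ) → ℝ, (∀ η ∈ A, w η = 1) → (∀ η ∈ B, w η = 0) →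
      ZR0.TS N r (fun η x y => (h η - h (move x y η))
        * (w η * condZR α r (μ N) η (move x y η)
            - w (move x y η) * condZR α r (μ N) (move x y η) η))
      = 2 * ∑ η ∈ A, -(μ N η * LgenR α r h η) := by
    intro w hw1 hw0
    have e1 : ZR0.TS N r (fun η x y => (h η - h (move x y η))
          * (w η * condZR α r (μ N) η (move x y η)
              - w (move x y η) * condZR α r (μ N) (move x y η) η))
        = ZR0.TS N r (fun η x y => (h η - h (move x y η)) * w η * condZR α r (μ N) η (move x y η)
            - (h η - h (move x y η)) * w (move x y η) * condZR α r (μ N) (move x y η) η) :=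
      ZR0.TS_congr fun η hη x y hq => by ring
    have e2 : ZR0.TS N r (fun η x y =>
          (h η - h (move x y η)) * w (move x y η) * condZR α r (μ N) (move x y η) η)
        = -ZR0.TS N r (fun η x y =>
          (h η - h (move x y η)) * w η * condZR α r (μ N) η (move x y η)) := by
      calc ZR0.TS N r (fun η x y =>
            (h η - h (move x y η)) * w (move x y η) * condZR α r (μ N) (move x y η) η)
          = ZR0.TS N r (fun η x y =>
              (h (move x y η) - h (move y x (move x y η)))
                * w (move y x (move x y η))
                * condZR α r (μ N) (move y x (move x y η)) (move x y η)) := ZR0.TS_rev _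
        _ = ZR0.TS N r (fun η x y => -((h η - h (move x y η)) * w η
              * condZR α r (μ N) η (move x y η))) :=
            ZR0.TS_congr fun η hη x y hq => by
              simp only [ZR0.move_move hq.1 hq.2.1]
              ring
        _ = -ZR0.TS N r (fun η x y =>
              (h η - h (move x y η)) * w η * condZR α r (μ N) η (move x y η)) :=
            ZR0.TS_neg _
    have e3 : ZR0.TS N r (fun η x y =>
          (h η - h (move x y η)) * w η * condZR α r (μ N) η (move x y η))
        = ∑ η ∈ configs S N, w η * (-(μ N η * LgenR α r h η)) := by
      unfold ZR0.TS
      refine Finset.sum_congr rfl fun η hη => ?_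
      calc ∑ x, ∑ y, (if ZR0.Q r η x y then
              (h η - h (move x y η)) * w η * condZR α r (μ N) η (move x y η) else 0)
          = ∑ x, ∑ y, w η * (if ZR0.Q r η x y then
              (h η - h (move x y η)) * condZR α r (μ N) η (move x y η) else 0) := by
            refine Finset.sum_congr rfl fun x _ => Finset.sum_congr rfl fun y _ => ?_
            split_ifs <;> ring
        _ = w η * ∑ x, ∑ y, (if ZR0.Q r η x y then
              (h η - h (move x y η)) * condZR α r (μ N) η (move x y η) else 0) := by
            simp only [← Finset.mul_sum]
        _ = w η * (-(μ N η * LgenR α r h η)) := by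
            rw [ZR0.sum_u_cf hr0 hrdiag (μ N) h η]
    have e4 : ∑ η ∈ configs S N, w η * (-(μ N η * LgenR α r h η))
        = ∑ η ∈ A, -(μ N η * LgenR α r h η) := by
      rw [← Finset.sum_sdiff hABsub, Finset.sum_union hdisj]
      have r1 : ∑ η ∈ configs S N \ (A ∪ B), w η * (-(μ N η * LgenR α r h η)) = 0 := by
        refine Finset.sum_eq_zero fun η hη => ?_
        rw [Finset.mem_sdiff, Finset.mem_union] at hη
        push_neg at hη
        rw [hharm η hη.1 hη.2.1 hη.2.2]
        ring
      have r2 : ∑ η ∈ B, w η * (-(μ N η * LgenR α r h η)) = 0 := by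
        refine Finset.sum_eq_zero fun η hη => ?_
        rw [hw0 η hη]
        ring
      have r3 : ∑ η ∈ A, w η * (-(μ N η * LgenR α r h η))
          = ∑ η ∈ A, -(μ N η * LgenR α r h η) := by
        refine Finset.sum_congr rfl fun η hη => ?_
        rw [hw1 η hη, one_mul]
      rw [r1, r2, r3]
      ring
    rw [e1, ZR0.TS_sub, e2, e3, e4]
    ring
  -- (8)+(9): Sf = 2K via w = h
  have hSf2K : ZR0.TS N r (fun η x y =>
        (h η - h (move x y η))^2 * condZR α r (μ N) η (move x y η))
      = 2 * ∑ η ∈ A, -(μ N η * LgenR α r h η) := by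
    have hJh := key_w h hh1 hh0
    -- J(h) = Sf + C'
    have eJ : ZR0.TS N r (fun η x y => (h η - h (move x y η))
          * (h η * condZR α r (μ N) η (move x y η)
              - h (move x y η) * condZR α r (μ N) (move x y η) η))
        = ZR0.TS N r (fun η x y =>
            (h η - h (move x y η))^2 * condZR α r (μ N) η (move x y η))
          + ZR0.TS N r (fun η x y => (h η - h (move x y η)) * h (move x y η)
              * (condZR α r (μ N) η (move x y η) - condZR α r (μ N) (move x y η) η)) := by
      rw [← ZR0.TS_add]
      exact ZR0.TS_congr fun η hη x y hq => by ring
    -- C' = T1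
    have eC : ZR0.TS N r (fun η x y => (h η - h (move x y η)) * h (move x y η)
          * (condZR α r (μ N) η (move x y η) - condZR α r (μ N) (move x y η) η))
        = ZR0.TS N r (fun η x y =>
            (h η)^2 * (condZR α r (μ N) η (move x y η) - condZR α r (μ N) (move x y η) η)) := by
      have c1 : ZR0.TS N r (fun η x y => (h η - h (move x y η)) * h (move x y η)
            * (condZR α r (μ N) η (move x y η) - condZR α r (μ N) (move x y η) η))
          = ZR0.TS N r (fun η x y => (h η - h (move x y η)) * h η
            * (condZR α r (μ N) η (move x y η) - condZR α r (μ N) (move x y η) η)) := by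
        calc ZR0.TS N r (fun η x y => (h η - h (move x y η)) * h (move x y η)
              * (condZR α r (μ N) η (move x y η) - condZR α r (μ N) (move x y η) η))
            = ZR0.TS N r (fun η x y => (h (move x y η) - h (move y x (move x y η)))
                * h (move y x (move x y η))
                * (condZR α r (μ N) (move x y η) (move y x (move x y η))
                    - condZR α r (μ N) (move y x (move x y η)) (move x y η))) := ZR0.TS_rev _
          _ = ZR0.TS N r (fun η x y => (h η - h (move x y η)) * h η
              * (condZR α r (μ N) η (move x y η) - condZR α r (μ N) (move x y η) η)) :=
              ZR0.TS_congr fun η hη x y hq => by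
                simp only [ZR0.move_move hq.1 hq.2.1]
                ring
      have c2 : ZR0.TS N r (fun η x y => (h (move x y η))^2
            * (condZR α r (μ N) η (move x y η) - condZR α r (μ N) (move x y η) η))
          = -ZR0.TS N r (fun η x y => (h η)^2
            * (condZR α r (μ N) η (move x y η) - condZR α r (μ N) (move x y η) η)) := by
        calc ZR0.TS N r (fun η x y => (h (move x y η))^2
              * (condZR α r (μ N) η (move x y η) - condZR α r (μ N) (move x y η) η))
            = ZR0.TS N r (fun η x y => (h (move y x (move x y η)))^2
                * (condZR α r (μ N) (move x y η) (move y x (move x y η))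
                    - condZR α r (μ N) (move y x (move x y η)) (move x y η))) := ZR0.TS_rev _
          _ = ZR0.TS N r (fun η x y => -((h η)^2
              * (condZR α r (μ N) η (move x y η) - condZR α r (μ N) (move x y η) η))) :=
              ZR0.TS_congr fun η hη x y hq => by
                simp only [ZR0.move_move hq.1 hq.2.1]
                ring
          _ = -ZR0.TS N r (fun η x y => (h η)^2
              * (condZR α r (μ N) η (move x y η) - condZR α r (μ N) (move x y η) η)) :=
              ZR0.TS_neg _
      -- 2 C' = T1 - T2 = 2 T1
      have c3 : ZR0.TS N r (fun η x y => (h η - h (move x y η)) * h η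
            * (condZR α r (μ N) η (move x y η) - condZR α r (μ N) (move x y η) η))
          + ZR0.TS N r (fun η x y => (h η - h (move x y η)) * h (move x y η)
            * (condZR α r (μ N) η (move x y η) - condZR α r (μ N) (move x y η) η))
          = ZR0.TS N r (fun η x y => (h η)^2
            * (condZR α r (μ N) η (move x y η) - condZR α r (μ N) (move x y η) η))
          - ZR0.TS N r (fun η x y => (h (move x y η))^2
            * (condZR α r (μ N) η (move x y η) - condZR α r (μ N) (move x y η) η)) := by
        rw [← ZR0.TS_add, ← ZR0.TS_sub]
        exact ZR0.TS_congr fun η hη x y hq => by ring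
      have c2' := c2
      linarith [c1, c3, c2']
    rw [eJ, eC, hT1, add_zero] at hJh
    exact hJh
  -- (6): IF = 2K via w = f
  have hIF : ZR0.TS N r (fun η x y =>
        (h η - h (move x y η)) * PhiF α r (μ N) f η (move x y η))
      = 2 * ∑ η ∈ A, -(μ N η * LgenR α r h η) := by
    have := key_w f hf1 hf0
    rw [← this]
    exact ZR0.TS_congr fun η hη x y hq => by simp only [PhiF]
  -- (5): Iφ = 2 (ε + Soff)
  have hIφ : ZR0.TS N r (fun η x y => (h η - h (move x y η)) * φ η (move x y η))
      = 2 * (ε + ∑ η ∈ configs S N \ (A ∪ B), h η * divFlow S r N φ η) := by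
    have e1 : ZR0.TS N r (fun η x y => (h η - h (move x y η)) * φ η (move x y η))
        = ZR0.TS N r (fun η x y => h η * φ η (move x y η)
            - h (move x y η) * φ η (move x y η)) :=
      ZR0.TS_congr fun η hη x y hq => by ring
    have e2 : ZR0.TS N r (fun η x y => h (move x y η) * φ η (move x y η))
        = -ZR0.TS N r (fun η x y => h η * φ η (move x y η)) := by
      calc ZR0.TS N r (fun η x y => h (move x y η) * φ η (move x y η))
          = ZR0.TS N r (fun η x y => h (move y x (move x y η))
              * φ (move x y η) (move y x (move x y η))) := ZR0.TS_rev _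
        _ = ZR0.TS N r (fun η x y => -(h η * φ η (move x y η))) :=
            ZR0.TS_congr fun η hη x y hq => by
              simp only [ZR0.move_move hq.1 hq.2.1]
              rw [hanti (move x y η) η]
              ring
        _ = -ZR0.TS N r (fun η x y => h η * φ η (move x y η)) := ZR0.TS_neg _
    have e3 : ZR0.TS N r (fun η x y => h η * φ η (move x y η))
        = ∑ η ∈ configs S N, h η * divFlow S r N φ η := by
      unfold ZR0.TS
      refine Finset.sum_congr rfl fun η hη => ?_
      calc ∑ x, ∑ y, (if ZR0.Q r η x y then h η * φ η (move x y η) else 0)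
          = ∑ x, ∑ y, h η * (if ZR0.Q r η x y then φ η (move x y η) else 0) := by
            refine Finset.sum_congr rfl fun x _ => Finset.sum_congr rfl fun y _ => ?_
            split_ifs <;> ring
        _ = h η * ∑ x, ∑ y, (if ZR0.Q r η x y then φ η (move x y η) else 0) := by
            simp only [← Finset.mul_sum]
        _ = h η * divFlow S r N φ η := by rw [← hdivF η hη]
    have e4 : ∑ η ∈ configs S N, h η * divFlow S r N φ η
        = ε + ∑ η ∈ configs S N \ (A ∪ B), h η * divFlow S r N φ η := by
      rw [← Finset.sum_sdiff hABsub, Finset.sum_union hdisj]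
      have r2 : ∑ η ∈ B, h η * divFlow S r N φ η = 0 :=
        Finset.sum_eq_zero fun η hη => by rw [hh0 η hη]; ring
      have r3 : ∑ η ∈ A, h η * divFlow S r N φ η = ε := by
        rw [← hdiv]
        exact Finset.sum_congr rfl fun η hη => by rw [hh1 η hη, one_mul]
      rw [r2, r3]
      ring
    rw [e1, ZR0.TS_sub, e2, e3, e4]
    ring
  -- (4): I1 = IF - Iφ
  have hI1 : ZR0.TS N r (fun η x y => (h η - h (move x y η))
        * (PhiF α r (μ N) f η (move x y η) - φ η (move x y η)))
      = ZR0.TS N r (fun η x y =>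
          (h η - h (move x y η)) * PhiF α r (μ N) f η (move x y η))
        - ZR0.TS N r (fun η x y => (h η - h (move x y η)) * φ η (move x y η)) := by
    rw [← ZR0.TS_sub]
    exact ZR0.TS_congr fun η hη x y hq => by ring
  -- (3): Cauchy-Schwarz
  have hCS : ZR0.TS N r (fun η x y =>
        2 * ((h η - h (move x y η))
          * (PhiF α r (μ N) f η (move x y η) - φ η (move x y η)))
        - (h η - h (move x y η))^2 * csymZR α r (μ N) η (move x y η))
      ≤ ZR0.TS N r (fun η x y =>
        (PhiF α r (μ N) f η (move x y η) - φ η (move x y η))^2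
          / csymZR α r (μ N) η (move x y η)) := by
    refine ZR0.TS_le fun η hη x y hq => ?_
    have hcpos : 0 < csymZR α r (μ N) η (move x y η) := ZR0.cs_pos hr0 hμpos hq
    have := ZR0.cs_ineq (a := PhiF α r (μ N) f η (move x y η) - φ η (move x y η))
      (u := h η - h (move x y η)) hcpos
    linarith
  -- decompose LHS of hCS
  have hdec : ZR0.TS N r (fun η x y =>
        2 * ((h η - h (move x y η))
          * (PhiF α r (μ N) f η (move x y η) - φ η (move x y η)))
        - (h η - h (move x y η))^2 * csymZR α r (μ N) η (move x y η))
      = 2 * ZR0.TS N r (fun η x y => (h η - h (move x y η))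
          * (PhiF α r (μ N) f η (move x y η) - φ η (move x y η)))
        - ZR0.TS N r (fun η x y =>
          (h η - h (move x y η))^2 * csymZR α r (μ N) η (move x y η)) := by
    rw [← ZR0.TS_smul, ← ZR0.TS_sub]
  -- conclude
  rw [F1]
  rw [F2] at *
  linarith [hCS, hdec, hScs, hSb, hSf2K, hIF, hIφ, hI1]
end
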